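/- Let L : C → ℝ be a convex differentiable function on the ℓ1 ball C = {x ∈ ℝ^p : ‖x‖₁ ≤ γ} with minimizer x* ∈ C. Suppose an approximate gradient oracle ∇̃L satisfies sup_{x ∈ C} ‖∇̃L(x) − ∇L(x)‖_∞ ≤ ε/(4γ), and sup_{x ∈ C} ‖∇̃L(x)‖₂ ≤ L₀. Consider projected gradient descent x^{t+1} = P_C(x^t − η ∇̃L(x^t)) starting from x¹ ∈ C with step size η = 2γ/(L₀√T). Then after T = ⌈16 γ² L₀² / ε²⌉ iterations, the averaged iterate x̄^T = (1/T) Σ_{t=1}^T x^t satisfies L(x̄^T) − L(x*) ≤ ε. -/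

import Mathlib

open Filter Topology Finset

local notation "⟪" a ", " b "⟫" => @inner ℝ _ _ a b

/-- The gradient inequality for convex functions: if `f` is convex on `s` and
differentiable at `x ∈ s` with gradient `g`, then `f x + ⟪g, y - x⟫ ≤ f y` for `y ∈ s`. -/
lemma convexOn_gradient_ineq' {E : Type*} [NormedAddCommGroup E] [InnerProductSpace ℝ E]
    [CompleteSpace E]
    {s : Set E} {f : E → ℝ} (hf : ConvexOn ℝ s f) {x y : E} {g : E}
    (hg : HasGradientAt f g x) (hx : x ∈ s) (hy : y ∈ s) :
    f x + ⟪g, y - x⟫ ≤ f y := by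
  set d := y - x with hd
  set φ : ℝ → ℝ := fun t => f (x + t • d) with hφ
  have hc : ∀ t : ℝ, HasDerivAt (fun t : ℝ => x + t • d) d t := by
    intro t
    simpa using ((hasDerivAt_id t).smul_const d).const_add x
  have hder : HasDerivAt φ ⟪g, d⟫ 0 := by
    have hfd : HasFDerivAt f ((InnerProductSpace.toDual ℝ E) g) (x + (0:ℝ) • d) := by
      simpa using hg.hasFDerivAt
    have := hfd.comp_hasDerivAt 0 (hc 0)
    exact this
  have hslope : ∀ t ∈ Set.Ioc (0:ℝ) 1, slope φ 0 t ≤ f y - f x := by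
    intro t ht
    have h1 : φ t ≤ (1 - t) * f x + t * f y := by
      have := hf.2 hx hy (by linarith [ht.2] : (0:ℝ) ≤ 1 - t) (le_of_lt ht.1) (by ring)
      have heq : (1 - t) • x + t • y = x + t • d := by
        simp only [hd, smul_sub]; module
      simpa [hφ, heq, smul_eq_mul] using this
    have : φ t - φ 0 ≤ t * (f y - f x) := by
      have hφ0 : φ 0 = f x := by simp [hφ]
      rw [hφ0]; nlinarith
    rw [slope_def_field, div_le_iff₀ (by linarith [ht.1] : (0:ℝ) < t - 0)]
    nlinarith
  have htend : Tendsto (slope φ 0) (𝓝[>] 0) (𝓝 ⟪g, d⟫) :=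
    (hasDerivAt_iff_tendsto_slope.1 hder).mono_left
      (nhdsWithin_mono _ (fun t ht => ne_of_gt ht))
  have hle : ⟪g, d⟫ ≤ f y - f x := by
    refine le_of_tendsto htend ?_
    filter_upwards [Ioc_mem_nhdsGT_of_mem (by norm_num : (0:ℝ) ∈ Set.Ico 0 1)] with t ht
    exact hslope t ht
  linarith

/-- Projection onto a convex set is contractive towards points of the set. -/
lemma proj_contract' {E : Type*} [NormedAddCommGroup E] [InnerProductSpace ℝ E]
    {C : Set E} (hC : Convex ℝ C) {y q : E} (hq : q ∈ C)
    (hmin : ∀ z ∈ C, ‖q - y‖ ≤ ‖z - y‖) {z : E} (hz : z ∈ C) :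
    ‖q - z‖ ≤ ‖y - z‖ := by
  haveI : Nonempty C := ⟨⟨q, hq⟩⟩
  have h1 : ‖y - q‖ = ⨅ w : C, ‖y - w‖ := by
    refine le_antisymm (le_ciInf fun w => ?_)
      (ciInf_le (f := fun w : C => ‖y - w‖) ⟨0, by rintro _ ⟨w, rfl⟩; exact norm_nonneg _⟩ ⟨q, hq⟩)
    rw [norm_sub_rev y q, norm_sub_rev y (w : E)]
    exact hmin w w.2
  have hvar : ⟪y - q, z - q⟫ ≤ 0 :=
    (norm_eq_iInf_iff_real_inner_le_zero hC hq).1 h1 z hz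
  have hsq : ‖q - z‖ ^ 2 ≤ ‖y - z‖ ^ 2 := by
    have hexp : ‖y - z‖ ^ 2 = ‖y - q‖ ^ 2 - 2 * ⟪y - q, z - q⟫ + ‖z - q‖ ^ 2 := by
      have h : y - z = (y - q) - (z - q) := by abel
      rw [h, norm_sub_sq_real]
    rw [norm_sub_rev q z]
    nlinarith [sq_nonneg ‖y - q‖]
  have h2 := Real.sqrt_le_sqrt hsq
  rwa [Real.sqrt_sq (norm_nonneg _), Real.sqrt_sq (norm_nonneg _)] at h2

/-- The Euclidean norm is bounded by the ℓ1 norm. -/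
lemma euclid_le_l1' {p : ℕ} (v : EuclideanSpace ℝ (Fin p)) : ‖v‖ ≤ ∑ i, |v i| := by
  rw [EuclideanSpace.norm_eq]
  have h : ∑ i, ‖v i‖ ^ 2 ≤ (∑ i, |v i|) ^ 2 := by
    simpa [Real.norm_eq_abs, sq_abs] using
      Finset.sum_sq_le_sq_sum_of_nonneg (f := fun i => |v i|)
        (fun i _ => abs_nonneg (v i)) (s := Finset.univ)
  calc Real.sqrt (∑ i, ‖v i‖ ^ 2) ≤ Real.sqrt ((∑ i, |v i|) ^ 2) := Real.sqrt_le_sqrt h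
    _ = ∑ i, |v i| := Real.sqrt_sq (Finset.sum_nonneg fun i _ => abs_nonneg _)

set_option maxHeartbeats 1000000 in
open Finset in
/-- Robustness of projected gradient descent on the ℓ1 ball: with an approximate gradient
oracle of ℓ∞ error at most `ε/(4γ)` and ℓ2 norm at most `L₀`, step size `η = 2γ/(L₀√T)`,
after `T = ⌈16γ²L₀²/ε²⌉` iterations the averaged iterate is `ε`-optimal. -/
theorem projected_gd_robust (p : ℕ) (γ ε L₀ : ℝ) (hγ : 0 < γ) (hε : 0 < ε) (hL₀ : 0 < L₀)
    (L : EuclideanSpace ℝ (Fin p) → ℝ)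
    (C : Set (EuclideanSpace ℝ (Fin p)))
    (hC : C = {x | ∑ i, |x i| ≤ γ})
    (hconv : ConvexOn ℝ C L)
    (G Gt : EuclideanSpace ℝ (Fin p) → EuclideanSpace ℝ (Fin p))
    (hgrad : ∀ x ∈ C, HasGradientAt L (G x) x)
    (herr : ∀ x ∈ C, ∀ i, |Gt x i - G x i| ≤ ε / (4 * γ))
    (hGtbound : ∀ x ∈ C, ‖Gt x‖ ≤ L₀)
    (xstar : EuclideanSpace ℝ (Fin p)) (hxstarC : xstar ∈ C)
    (hmin : ∀ z ∈ C, L xstar ≤ L z)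
    (T : ℕ) (hT : T = ⌈16 * γ ^ 2 * L₀ ^ 2 / ε ^ 2⌉₊)
    (η : ℝ) (hη : η = 2 * γ / (L₀ * Real.sqrt T))
    (P : EuclideanSpace ℝ (Fin p) → EuclideanSpace ℝ (Fin p))
    (hPmem : ∀ y, P y ∈ C)
    (hPproj : ∀ y, ∀ z ∈ C, ‖P y - y‖ ≤ ‖z - y‖)
    (x : ℕ → EuclideanSpace ℝ (Fin p))
    (hx1 : x 1 ∈ C)
    (hrec : ∀ t, x (t + 1) = P (x t - η • Gt (x t))) :
    L ((T : ℝ)⁻¹ • ∑ t ∈ Finset.Icc 1 T, x t) - L xstar ≤ ε := by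
  -- Basic setup
  have hT1 : 1 ≤ T := by
    rw [hT]
    exact Nat.one_le_iff_ne_zero.2 (Nat.ceil_pos.2 (by positivity)).ne'
  have hT0 : (0:ℝ) < T := by exact_mod_cast Nat.lt_of_lt_of_le Nat.zero_lt_one hT1
  set s := Real.sqrt T with hs
  have hs0 : 0 < s := Real.sqrt_pos.2 hT0
  have hs2 : s ^ 2 = (T : ℝ) := Real.sq_sqrt hT0.le
  have hη0 : 0 < η := by rw [hη]; positivity
  have hηLs : η * (L₀ * s) = 2 * γ := by
    rw [hη]; field_simp
  have hsε : 4 * γ * L₀ ≤ ε * s := by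
    have hTle : 16 * γ ^ 2 * L₀ ^ 2 / ε ^ 2 ≤ (T : ℝ) := by
      rw [hT]; exact Nat.le_ceil _
    have h4 : (4 * γ * L₀ / ε) ^ 2 ≤ s ^ 2 := by
      rw [hs2]
      calc (4 * γ * L₀ / ε) ^ 2 = 16 * γ ^ 2 * L₀ ^ 2 / ε ^ 2 := by ring
        _ ≤ (T : ℝ) := hTle
    have h5 : 4 * γ * L₀ / ε ≤ s := by
      have h6 := Real.sqrt_le_sqrt h4
      rwa [Real.sqrt_sq (by positivity : (0:ℝ) ≤ 4 * γ * L₀ / ε),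
        Real.sqrt_sq hs0.le] at h6
    calc 4 * γ * L₀ = (4 * γ * L₀ / ε) * ε := by field_simp
      _ ≤ s * ε := mul_le_mul_of_nonneg_right h5 hε.le
      _ = ε * s := by ring
  -- Convexity of C
  have hCconv : Convex ℝ C := by
    rw [hC]
    intro u hu v hv a b ha hb hab
    simp only [Set.mem_setOf_eq] at hu hv ⊢
    calc ∑ i, |(a • u + b • v) i| ≤ ∑ i, (a * |u i| + b * |v i|) := by
          refine Finset.sum_le_sum fun i _ => ?_
          have happ : (a • u + b • v) i = a * u i + b * v i := rfl
          rw [happ]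
          calc |a * u i + b * v i| ≤ |a * u i| + |b * v i| := abs_add_le _ _
            _ = a * |u i| + b * |v i| := by
                rw [abs_mul, abs_mul, abs_of_nonneg ha, abs_of_nonneg hb]
      _ = a * ∑ i, |u i| + b * ∑ i, |v i| := by
          rw [Finset.sum_add_distrib, Finset.mul_sum, Finset.mul_sum]
      _ ≤ a * γ + b * γ := by
          gcongr
      _ = γ := by rw [← add_mul, hab, one_mul]
  -- ℓ1 distance bound between members
  have hl1diam : ∀ v ∈ C, ∀ w ∈ C, ∑ i, |v i - w i| ≤ 2 * γ := by
    intro v hv w hw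
    rw [hC] at hv hw
    calc ∑ i, |v i - w i| ≤ ∑ i, (|v i| + |w i|) := by
          refine Finset.sum_le_sum fun i _ => ?_
          calc |v i - w i| = |v i + -(w i)| := by rw [sub_eq_add_neg]
            _ ≤ |v i| + |-(w i)| := abs_add_le _ _
            _ = |v i| + |w i| := by rw [abs_neg]
      _ = ∑ i, |v i| + ∑ i, |w i| := Finset.sum_add_distrib
      _ ≤ γ + γ := add_le_add hv hw
      _ = 2 * γ := by ring
  -- iterates stay in C
  have hxC : ∀ t : ℕ, 1 ≤ t → x t ∈ C := by
    intro t ht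
    obtain ⟨u, rfl⟩ := Nat.exists_eq_add_of_le ht
    rw [add_comm, hrec]
    · exact hPmem _
  -- per-step key inequality
  have key : ∀ t : ℕ, 1 ≤ t →
      2 * η * (L (x t) - L xstar) ≤
        ‖x t - xstar‖ ^ 2 - ‖x (t+1) - xstar‖ ^ 2 + η ^ 2 * L₀ ^ 2 + η * ε := by
    intro t ht
    have hxt : x t ∈ C := hxC t ht
    set g := Gt (x t) with hgdef
    have hproj : ‖x (t+1) - xstar‖ ≤ ‖(x t - η • g) - xstar‖ := by
      rw [hrec t]
      exact proj_contract' hCconv (hPmem _) (fun z hz => hPproj _ z hz) hxstarC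
    have hexp : ‖(x t - η • g) - xstar‖ ^ 2
        = ‖x t - xstar‖ ^ 2 - 2 * η * ⟪g, x t - xstar⟫ + η ^ 2 * ‖g‖ ^ 2 := by
      have heq : (x t - η • g) - xstar = (x t - xstar) - η • g := by abel
      have h2 : ⟪x t - xstar, η • g⟫ = η * ⟪g, x t - xstar⟫ := by
        rw [real_inner_smul_right, real_inner_comm]
      have h3 : ‖η • g‖ ^ 2 = η ^ 2 * ‖g‖ ^ 2 := by
        rw [norm_smul, mul_pow, Real.norm_eq_abs, sq_abs]
      rw [heq, norm_sub_sq_real, h2, h3]; ring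
    have hsqproj : ‖x (t+1) - xstar‖ ^ 2 ≤ ‖(x t - η • g) - xstar‖ ^ 2 :=
      pow_le_pow_left₀ (norm_nonneg _) hproj 2
    have hg2 : ‖g‖ ^ 2 ≤ L₀ ^ 2 := pow_le_pow_left₀ (norm_nonneg _) (hGtbound _ hxt) 2
    -- gradient inequality
    have hcvx : L (x t) - L xstar ≤ ⟪G (x t), x t - xstar⟫ := by
      have h := convexOn_gradient_ineq' hconv (hgrad _ hxt) hxt hxstarC
      have h2 : ⟪G (x t), xstar - x t⟫ = -⟪G (x t), x t - xstar⟫ := by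
        rw [← inner_neg_right, neg_sub]
      rw [h2] at h
      linarith
    -- Hölder bound on the error term
    have hhold : ⟪G (x t) - g, x t - xstar⟫ ≤ ε / 2 := by
      have hinner : ⟪G (x t) - g, x t - xstar⟫
          = ∑ i, (G (x t) i - g i) * (x t i - xstar i) := by
        rw [PiLp.inner_apply]
        refine Finset.sum_congr rfl fun i _ => ?_
        have h1 : (G (x t) - g) i = G (x t) i - g i := rfl
        have h2 : (x t - xstar) i = x t i - xstar i := rfl
        rw [h1, h2, RCLike.inner_apply, conj_trivial]; ring
      rw [hinner]
      calc ∑ i, (G (x t) i - g i) * (x t i - xstar i)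
          ≤ ∑ i, (ε / (4 * γ)) * |x t i - xstar i| := by
            refine Finset.sum_le_sum fun i _ => ?_
            calc (G (x t) i - g i) * (x t i - xstar i)
                ≤ |(G (x t) i - g i) * (x t i - xstar i)| := le_abs_self _
              _ = |G (x t) i - g i| * |x t i - xstar i| := abs_mul _ _
              _ ≤ (ε / (4 * γ)) * |x t i - xstar i| := by
                  refine mul_le_mul_of_nonneg_right ?_ (abs_nonneg _)
                  rw [abs_sub_comm]
                  exact herr _ hxt i
        _ = (ε / (4 * γ)) * ∑ i, |x t i - xstar i| := by rw [Finset.mul_sum]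
        _ ≤ (ε / (4 * γ)) * (2 * γ) := by
            refine mul_le_mul_of_nonneg_left (hl1diam _ hxt _ hxstarC) (by positivity)
        _ = ε / 2 := by field_simp; ring
    have hsplit : ⟪G (x t), x t - xstar⟫
        = ⟪g, x t - xstar⟫ + ⟪G (x t) - g, x t - xstar⟫ := by
      rw [← inner_add_left]; congr 1; abel
    have hL : L (x t) - L xstar ≤ ⟪g, x t - xstar⟫ + ε / 2 := by
      rw [hsplit] at hcvx
      linarith
    have hstep : 2 * η * ⟪g, x t - xstar⟫ ≤
        ‖x t - xstar‖ ^ 2 - ‖x (t+1) - xstar‖ ^ 2 + η ^ 2 * L₀ ^ 2 := by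
      nlinarith [hsqproj, hexp, hg2, sq_nonneg η]
    have h2η : (0:ℝ) ≤ 2 * η := by linarith
    calc 2 * η * (L (x t) - L xstar) ≤ 2 * η * (⟪g, x t - xstar⟫ + ε / 2) :=
          mul_le_mul_of_nonneg_left hL h2η
      _ = 2 * η * ⟪g, x t - xstar⟫ + η * ε := by ring
      _ ≤ ‖x t - xstar‖ ^ 2 - ‖x (t+1) - xstar‖ ^ 2 + η ^ 2 * L₀ ^ 2 + η * ε := by
          linarith
  -- sum the key inequality
  set D : ℕ → ℝ := fun t => ‖x t - xstar‖ ^ 2 with hD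
  have htel : ∑ t ∈ Finset.Icc 1 T, (D t - D (t+1)) = D 1 - D (T+1) := by
    have h1 : Finset.Icc 1 T = Finset.Ico 1 (T+1) := by
      rw [Finset.Ico_add_one_right_eq_Icc]
    have h2 : ∑ i ∈ Finset.range T, (D (i + 1) - D (i + 1 + 1)) = D 1 - D (T + 1) :=
      Finset.sum_range_sub' (fun i => D (i + 1)) T
    rw [h1, Finset.sum_Ico_eq_sum_range, ← h2]
    exact Finset.sum_congr rfl fun i _ => by rw [add_comm 1 i]
  have hsum : 2 * η * (∑ t ∈ Finset.Icc 1 T, (L (x t) - L xstar)) ≤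
      D 1 - D (T+1) + T * (η ^ 2 * L₀ ^ 2 + η * ε) := by
    calc 2 * η * (∑ t ∈ Finset.Icc 1 T, (L (x t) - L xstar))
        = ∑ t ∈ Finset.Icc 1 T, 2 * η * (L (x t) - L xstar) := by rw [Finset.mul_sum]
      _ ≤ ∑ t ∈ Finset.Icc 1 T, (D t - D (t+1) + (η ^ 2 * L₀ ^ 2 + η * ε)) := by
          refine Finset.sum_le_sum fun t ht => ?_
          have ht1 : 1 ≤ t := (Finset.mem_Icc.1 ht).1
          have := key t ht1
          simp only [hD]
          linarith
      _ = (∑ t ∈ Finset.Icc 1 T, (D t - D (t+1)))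
            + (Finset.Icc 1 T).card * (η ^ 2 * L₀ ^ 2 + η * ε) := by
          rw [Finset.sum_add_distrib, Finset.sum_const, nsmul_eq_mul]
      _ = D 1 - D (T+1) + T * (η ^ 2 * L₀ ^ 2 + η * ε) := by
          rw [htel, Nat.card_Icc]; norm_num
  -- bound D 1
  have hD1 : D 1 ≤ 4 * γ ^ 2 := by
    have h1 : ‖x 1 - xstar‖ ≤ 2 * γ :=
      (euclid_le_l1' _).trans (by
        have := hl1diam _ hx1 _ hxstarC
        refine le_trans (le_of_eq ?_) this
        refine Finset.sum_congr rfl fun i _ => rfl)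
    have := pow_le_pow_left₀ (norm_nonneg _) h1 2
    simpa [hD] using this.trans_eq (by ring)
  have hDT : 0 ≤ D (T+1) := sq_nonneg _
  -- Jensen
  have hmemIcc : ∀ t ∈ Finset.Icc 1 T, x t ∈ C := fun t ht => hxC t (Finset.mem_Icc.1 ht).1
  have hcard : ((Finset.Icc 1 T).card : ℝ) = (T : ℝ) := by
    rw [Nat.card_Icc]; norm_num
  have hjensen : L ((T : ℝ)⁻¹ • ∑ t ∈ Finset.Icc 1 T, x t)
      ≤ (T : ℝ)⁻¹ * ∑ t ∈ Finset.Icc 1 T, L (x t) := by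
    have hw1 : ∑ _t ∈ Finset.Icc 1 T, (T : ℝ)⁻¹ = 1 := by
      rw [Finset.sum_const, nsmul_eq_mul, hcard]
      field_simp
    have h := hconv.map_sum_le (t := Finset.Icc 1 T) (w := fun _ => (T : ℝ)⁻¹)
      (p := x) (fun i _ => by positivity) hw1 hmemIcc
    have hL : ∑ t ∈ Finset.Icc 1 T, (T : ℝ)⁻¹ • L (x t)
        = (T : ℝ)⁻¹ * ∑ t ∈ Finset.Icc 1 T, L (x t) := by
      rw [Finset.mul_sum]
      exact Finset.sum_congr rfl fun i _ => rfl
    have hX : ∑ t ∈ Finset.Icc 1 T, (T : ℝ)⁻¹ • x t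
        = (T : ℝ)⁻¹ • ∑ t ∈ Finset.Icc 1 T, x t := (Finset.smul_sum).symm
    rw [hX, hL] at h
    exact h
  -- put everything together
  have hS : ∑ t ∈ Finset.Icc 1 T, (L (x t) - L xstar) ≤ (T : ℝ) * ε := by
    have h1 : 2 * η * (∑ t ∈ Finset.Icc 1 T, (L (x t) - L xstar)) ≤
        4 * γ ^ 2 + T * (η ^ 2 * L₀ ^ 2 + η * ε) := by linarith
    -- 4γ² = (η L₀ s)², T = s², show RHS ≤ 2η T ε
    have h2 : 4 * γ ^ 2 + (T:ℝ) * (η ^ 2 * L₀ ^ 2 + η * ε) ≤ 2 * η * ((T:ℝ) * ε) := by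
      have h4γ : 4 * γ ^ 2 = η ^ 2 * L₀ ^ 2 * s ^ 2 := by
        linear_combination (-(2 * γ) - η * (L₀ * s)) * hηLs
      rw [h4γ, ← hs2]
      have hprod : 2 * η * L₀ ^ 2 * s = 4 * γ * L₀ := by
        linear_combination 2 * L₀ * hηLs
      have hkey : 2 * η * L₀ ^ 2 ≤ ε := by
        rw [← hprod] at hsε
        exact le_of_mul_le_mul_right (by linarith) hs0
      linarith [mul_le_mul_of_nonneg_left hkey (by positivity : (0:ℝ) ≤ η * s ^ 2)]
    have h3 := h1.trans h2
    exact le_of_mul_le_mul_left h3 (by linarith : (0:ℝ) < 2 * η)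
  have hfin : (T : ℝ)⁻¹ * ∑ t ∈ Finset.Icc 1 T, L (x t) - L xstar ≤ ε := by
    have hsum2 : ∑ t ∈ Finset.Icc 1 T, (L (x t) - L xstar)
        = (∑ t ∈ Finset.Icc 1 T, L (x t)) - T * L xstar := by
      rw [Finset.sum_sub_distrib, Finset.sum_const, nsmul_eq_mul, hcard]
    rw [hsum2] at hS
    have hTinv : (0:ℝ) < (T : ℝ)⁻¹ := by positivity
    have := mul_le_mul_of_nonneg_left hS hTinv.le
    rw [mul_sub, mul_comm (T:ℝ)⁻¹ ((T:ℝ) * ε)] at this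
    have hTT : (T:ℝ)⁻¹ * ((T:ℝ) * L xstar) = L xstar := by field_simp
    have hTT2 : (T:ℝ) * ε * (T:ℝ)⁻¹ = ε := by field_simp
    rw [hTT, hTT2] at this
    linarith
  linarith [hjensen]
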